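/- arXiv:2007.15809 — 4 statements merged into one kernel-verified Lean document; each statement's English description precedes it below -/
import Mathlib

section
/- Let a, b, τ be real numbers with a ≠ 0 and τ ≥ 0. Then |∫₀^τ exp(i s (a² + 2ab)) ds − (exp(i τ a²) − 1)/(i a²) − (2b/a³)·(exp(i τ a²)(i + τ a²) − i)| ≤ (2/3) τ³ a² b². -/
open Complex intervalIntegral

lemma aux1 (t : ℝ) : ‖Complex.exp (Complex.I * t) - 1‖ ≤ |t| := by
  have hsq : ‖Complex.exp (Complex.I * t) - 1‖^2 = 2 - 2 * Real.cos t := by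
    rw [mul_comm, Complex.sq_norm, Complex.normSq_apply]
    simp [Complex.exp_ofReal_mul_I_re, Complex.exp_ofReal_mul_I_im]
    nlinarith [Real.sin_sq_add_cos_sq t]
  have h1 := Real.one_sub_sq_div_two_le_cos (x := t)
  have h3 : ‖Complex.exp (Complex.I * t) - 1‖^2 ≤ |t|^2 := by
    rw [hsq, _root_.sq_abs]; nlinarith
  nlinarith [norm_nonneg (Complex.exp (Complex.I * t) - 1), abs_nonneg t]

lemma aux2 (t : ℝ) (ht : 0 ≤ t) :
    ‖Complex.exp (Complex.I * t) - 1 - Complex.I * t‖ ≤ t^2 / 2 := by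
  have hderiv : ∀ s : ℝ, s ∈ Set.uIcc 0 t →
      HasDerivAt (fun u : ℝ => Complex.exp (Complex.I * u) - Complex.I * u)
        (Complex.I * Complex.exp (Complex.I * s) - Complex.I) s := by
    intro s _
    have h1 : HasDerivAt (fun u : ℝ => (u : ℂ)) 1 s := by
      exact Complex.ofRealCLM.hasDerivAt (x := s)
    have h2 : HasDerivAt (fun u : ℝ => Complex.I * (u : ℂ)) Complex.I s := by
      simpa using h1.const_mul Complex.I
    have h3 := h2.cexp
    have : HasDerivAt (fun u : ℝ => Complex.exp (Complex.I * u) - Complex.I * u) _ s := h3.sub h2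
    convert this using 1
    ring
  have hcont : Continuous fun s : ℝ => Complex.I * Complex.exp (Complex.I * s) - Complex.I := by
    fun_prop
  have hftc := intervalIntegral.integral_eq_sub_of_hasDerivAt hderiv
    (hcont.intervalIntegrable 0 t)
  have heq : Complex.exp (Complex.I * t) - 1 - Complex.I * t
      = ∫ s in (0:ℝ)..t, (Complex.I * Complex.exp (Complex.I * s) - Complex.I) := by
    rw [hftc]; simp; ring
  rw [heq]
  have hb : ‖∫ s in (0:ℝ)..t, (Complex.I * Complex.exp (Complex.I * s) - Complex.I)‖
      ≤ |∫ s in (0:ℝ)..t, s| := by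
    apply intervalIntegral.norm_integral_le_abs_of_norm_le _
      (intervalIntegrable_id (a := 0) (b := t) (μ := MeasureTheory.volume))
    filter_upwards [MeasureTheory.ae_restrict_mem measurableSet_Ioc] with s hs
    rw [Set.uIoc_of_le ht] at hs
    have : Complex.I * Complex.exp (Complex.I * s) - Complex.I
        = Complex.I * (Complex.exp (Complex.I * s) - 1) := by ring
    rw [this, norm_mul, Complex.norm_I, one_mul]
    exact (aux1 s).trans (le_of_eq (_root_.abs_of_nonneg hs.1.le))
  refine hb.trans ?_
  rw [integral_id, show ((t^2 - 0^2)/2 : ℝ) = t^2/2 by ring,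
    _root_.abs_of_nonneg (by positivity)]

lemma aux3 (t : ℝ) :
    ‖Complex.exp (Complex.I * t) - 1 - Complex.I * t‖ ≤ t^2 / 2 := by
  rcases le_total 0 t with ht | ht
  · exact aux2 t ht
  · have h := aux2 (-t) (by linarith)
    have heq : Complex.exp (Complex.I * t) - 1 - Complex.I * t
        = (starRingEnd ℂ) (Complex.exp (Complex.I * ((-t : ℝ) : ℂ)) - 1
            - Complex.I * ((-t : ℝ) : ℂ)) := by
      rw [map_sub, map_sub, ← Complex.exp_conj]
      push_cast
      simp [Complex.conj_I]
    rw [heq, Complex.norm_conj]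
    calc _ ≤ (-t)^2 / 2 := by exact_mod_cast h
    _ = t^2 / 2 := by ring

/-- Local truncation error, with explicit constant, of the low-regularity integrator's
frequency-level approximation of the potential term of the disordered NLS:
`|∫₀^τ exp(i s (a² + 2ab)) ds − (exp(i τ a²) − 1)/(i a²)
   − (2b/a³)(exp(i τ a²)(i + τ a²) − i)| ≤ (2/3) τ³ a² b²`. -/
theorem stmt_5 (a b τ : ℝ) (ha : a ≠ 0) (hτ : 0 ≤ τ) :
    ‖
      ((∫ s in (0 : ℝ)..τ,
          Complex.exp (Complex.I * (s : ℂ) * ((a : ℂ) ^ 2 + 2 * (a : ℂ) * (b : ℂ)))) -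
        (Complex.exp (Complex.I * (τ : ℂ) * (a : ℂ) ^ 2) - 1) / (Complex.I * (a : ℂ) ^ 2) -
        (2 * (b : ℂ) / (a : ℂ) ^ 3) *
          (Complex.exp (Complex.I * (τ : ℂ) * (a : ℂ) ^ 2) *
            (Complex.I + (τ : ℂ) * (a : ℂ) ^ 2) - Complex.I))‖ ≤
      (2 / 3) * τ ^ 3 * a ^ 2 * b ^ 2 := by
  have ha' : (a : ℂ) ≠ 0 := Complex.ofReal_ne_zero.mpr ha
  -- the approximating integrand
  set f : ℝ → ℂ := fun s => Complex.exp (Complex.I * (s : ℂ) * ((a : ℂ)^2 + 2*(a:ℂ)*(b:ℂ)))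
  set h : ℝ → ℂ := fun s =>
    Complex.exp (Complex.I * (s : ℂ) * (a : ℂ)^2) * (1 + 2*Complex.I*(a:ℂ)*(b:ℂ)*(s:ℂ))
  -- antiderivative of h
  set F : ℝ → ℂ := fun s =>
    Complex.exp (Complex.I * (s : ℂ) * (a : ℂ)^2) / (Complex.I * (a:ℂ)^2)
      + (2*(b:ℂ)/(a:ℂ)^3) *
        (Complex.exp (Complex.I * (s : ℂ) * (a : ℂ)^2) * (Complex.I + (s:ℂ)*(a:ℂ)^2))
  have hF : ∀ s : ℝ, s ∈ Set.uIcc 0 τ → HasDerivAt F (h s) s := by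
    intro s _
    have h1 : HasDerivAt (fun u : ℝ => (u : ℂ)) 1 s := by
      exact Complex.ofRealCLM.hasDerivAt (x := s)
    have h2 : HasDerivAt (fun u : ℝ => Complex.I * (u : ℂ) * (a:ℂ)^2)
        (Complex.I * (a:ℂ)^2) s := by
      simpa [mul_assoc, mul_comm, mul_left_comm] using (h1.const_mul Complex.I).mul_const ((a:ℂ)^2)
    have hE := h2.cexp
    have h3 : HasDerivAt (fun u : ℝ => Complex.I + (u:ℂ)*(a:ℂ)^2) ((a:ℂ)^2) s := by
      simpa using (h1.mul_const ((a:ℂ)^2)).const_add Complex.I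
    have h4 := ((hE.div_const (Complex.I * (a:ℂ)^2)).add ((hE.mul h3).const_mul (2*(b:ℂ)/(a:ℂ)^3)))
    have h4 : HasDerivAt F _ s := h4
    convert h4 using 1
    show _ = _ + _
    field_simp [Complex.I_ne_zero]
    ring_nf
    simp [Complex.I_sq]
    simp only [h]
    ring_nf
  have hhcont : Continuous h := by fun_prop
  have hfcont : Continuous f := by fun_prop
  have hftc := intervalIntegral.integral_eq_sub_of_hasDerivAt hF (hhcont.intervalIntegrable 0 τ)
  have hFval : F τ - F 0 =
      (Complex.exp (Complex.I * (τ : ℂ) * (a : ℂ) ^ 2) - 1) / (Complex.I * (a : ℂ) ^ 2) +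
        (2 * (b : ℂ) / (a : ℂ) ^ 3) *
          (Complex.exp (Complex.I * (τ : ℂ) * (a : ℂ) ^ 2) *
            (Complex.I + (τ : ℂ) * (a : ℂ) ^ 2) - Complex.I) := by
    simp only [F, Complex.ofReal_zero, mul_zero, zero_mul, Complex.exp_zero]
    ring
  have key : ((∫ s in (0 : ℝ)..τ, f s) -
        (Complex.exp (Complex.I * (τ : ℂ) * (a : ℂ) ^ 2) - 1) / (Complex.I * (a : ℂ) ^ 2) -
        (2 * (b : ℂ) / (a : ℂ) ^ 3) *
          (Complex.exp (Complex.I * (τ : ℂ) * (a : ℂ) ^ 2) *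
            (Complex.I + (τ : ℂ) * (a : ℂ) ^ 2) - Complex.I))
      = ∫ s in (0:ℝ)..τ, (f s - h s) := by
    rw [intervalIntegral.integral_sub (hfcont.intervalIntegrable 0 τ)
      (hhcont.intervalIntegrable 0 τ), hftc, hFval]
    ring
  rw [key]
  have hb : ‖∫ s in (0:ℝ)..τ, (f s - h s)‖ ≤ |∫ s in (0:ℝ)..τ, 2*a^2*b^2*s^2| := by
    apply intervalIntegral.norm_integral_le_abs_of_norm_le _
      (((continuous_const.mul (continuous_pow 2))).intervalIntegrable 0 τ)
    filter_upwards [MeasureTheory.ae_restrict_mem measurableSet_Ioc] with s hs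
    have hfh : f s - h s = Complex.exp (Complex.I * (s:ℂ) * (a:ℂ)^2) *
        (Complex.exp (Complex.I * ((2*a*b*s : ℝ) : ℂ)) - 1
          - Complex.I * ((2*a*b*s : ℝ) : ℂ)) := by
      have harg : Complex.I * (s:ℂ) * ((a:ℂ)^2 + 2*(a:ℂ)*(b:ℂ))
          = Complex.I * (s:ℂ) * (a:ℂ)^2 + Complex.I * ((2*a*b*s : ℝ):ℂ) := by
        push_cast; ring
      simp only [f, h, harg, Complex.exp_add]
      push_cast
      ring
    rw [hfh, norm_mul]
    have h1 : ‖Complex.exp (Complex.I * (s:ℂ) * (a:ℂ)^2)‖ = 1 := by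
      rw [Complex.norm_exp]
      have hre : (Complex.I * (s:ℂ) * ((a:ℂ))^2).re = 0 := by
        rw [show ((a:ℂ))^2 = ((a^2 : ℝ) : ℂ) by push_cast; ring]
        simp only [Complex.mul_re, Complex.mul_im, Complex.I_re, Complex.I_im,
          Complex.ofReal_re, Complex.ofReal_im]
        ring
      rw [hre, Real.exp_zero]
    rw [h1, one_mul]
    calc ‖_‖ ≤ (2*a*b*s)^2/2 := aux3 (2*a*b*s)
      _ = 2*a^2*b^2*s^2 := by ring
  refine hb.trans ?_
  have : ∫ s in (0:ℝ)..τ, 2*a^2*b^2*s^2 = 2*a^2*b^2*(τ^3/3) := by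
    rw [intervalIntegral.integral_const_mul, integral_pow]
    norm_num
  have h0 : (0:ℝ) ≤ 2*a^2*b^2*(τ^3/3) :=
    mul_nonneg (by positivity) (div_nonneg (pow_nonneg hτ 3) (by norm_num))
  rw [this, _root_.abs_of_nonneg h0]
  exact le_of_eq (by ring)
end

section
/- Let μ, ν, τ be real numbers with μ ≠ 0 and τ > 0. Then |(2ν/μ³)·(exp(i τ μ²)(i + τ μ²) − i) − (2 sin(ν τ)/(μ³ τ))·(exp(i τ μ²)(i + τ μ²) − i)| ≤ (1/2) τ³ |μ| ν². -/
open intervalIntegral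

lemma keyA (x : ℝ) (hx : 0 ≤ x) :
    ‖Complex.exp (Complex.I * x) * (Complex.I + x) - Complex.I‖ ≤ x ^ 2 / 2 := by
  set f : ℝ → ℂ := fun s => Complex.exp (Complex.I * s) * (Complex.I + s) - Complex.I with hf
  have hderiv : ∀ t ∈ Set.uIcc (0:ℝ) x,
      HasDerivAt f (Complex.I * t * Complex.exp (Complex.I * t)) t := by
    intro t _
    have h0 : HasDerivAt (fun w : ℂ => Complex.exp (Complex.I * w))
        (Complex.I * Complex.exp (Complex.I * t)) (t : ℂ) := by
      simpa [mul_comm] using (((hasDerivAt_id (t:ℂ)).const_mul Complex.I).cexp)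
    have h1 := h0.comp_ofReal
    have h2 : HasDerivAt (fun s : ℝ => Complex.I + (s : ℂ)) 1 t := by
      simpa using (Complex.ofRealCLM.hasDerivAt (x := t)).const_add Complex.I
    have := (h1.mul h2).sub_const Complex.I
    exact this.congr_deriv (by
      linear_combination (Complex.exp (Complex.I * t)) * Complex.I_mul_I)
  have hcont : IntervalIntegrable (fun t : ℝ => Complex.I * t * Complex.exp (Complex.I * t))
      MeasureTheory.volume 0 x := by
    apply Continuous.intervalIntegrable
    continuity
  have hint := intervalIntegral.integral_eq_sub_of_hasDerivAt hderiv hcont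
  have hf0 : f 0 = 0 := by simp [hf]
  have hfx : f x = ∫ t in (0:ℝ)..x, Complex.I * t * Complex.exp (Complex.I * t) := by
    rw [hint, hf0, sub_zero]
  have hbound : ‖∫ t in (0:ℝ)..x, Complex.I * t * Complex.exp (Complex.I * t)‖
      ≤ ∫ t in (0:ℝ)..x, |t| := by
    have := intervalIntegral.norm_integral_le_integral_norm
      (f := fun t : ℝ => Complex.I * t * Complex.exp (Complex.I * t))
      (μ := MeasureTheory.volume) (a := (0:ℝ)) (b := x) hx
    convert this using 2 with t
    simp [Complex.norm_exp, Complex.norm_real]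
  have hid : (∫ t in (0:ℝ)..x, |t|) = x ^ 2 / 2 := by
    have : ∀ t ∈ Set.uIcc (0:ℝ) x, |t| = t := by
      intro t ht
      rw [Set.uIcc_of_le hx] at ht
      exact abs_of_nonneg ht.1
    rw [intervalIntegral.integral_congr this, integral_id]
    ring
  calc ‖f x‖ = ‖f x‖ := rfl
    _ ≤ x ^ 2 / 2 := by rw [hfx, ← hid]; exact hbound

lemma keyB0 (y : ℝ) (hy : 0 ≤ y) : |Real.sin y - y| ≤ y ^ 2 / 2 := by
  have hcos : ∀ t : ℝ, |Real.cos t - 1| ≤ |t| := by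
    intro t
    have e : Real.cos t = 1 - 2 * Real.sin (t / 2) ^ 2 := by
      have h1 := Real.cos_two_mul' (t / 2)
      have h2 := Real.sin_sq_add_cos_sq (t / 2)
      have h3 : 2 * (t / 2) = t := by ring
      rw [h3] at h1
      linarith
    have hs1 : |Real.sin (t / 2)| ≤ |t / 2| := Real.abs_sin_le_abs
    have hs2 : |Real.sin (t / 2)| ≤ 1 := Real.abs_sin_le_one _
    have hs3 : |t / 2| = |t| / 2 := by rw [abs_div]; norm_num
    have hs4 := sq_abs (Real.sin (t / 2))
    rw [e]
    rw [show (1 : ℝ) - 2 * Real.sin (t / 2) ^ 2 - 1 = -(2 * Real.sin (t / 2) ^ 2) by ring,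
      abs_neg, abs_of_nonneg (by positivity)]
    nlinarith [mul_le_mul hs2 hs1 (abs_nonneg _) zero_le_one]
  have hint : Real.sin y - y = ∫ t in (0:ℝ)..y, (Real.cos t - 1) := by
    rw [intervalIntegral.integral_sub (Continuous.intervalIntegrable (by continuity) _ _)
      (Continuous.intervalIntegrable (by continuity) _ _)]
    simp [integral_cos]
  rw [hint, ← Real.norm_eq_abs]
  calc ‖∫ t in (0:ℝ)..y, (Real.cos t - 1)‖
      ≤ ∫ t in (0:ℝ)..y, |t| := by
        have := intervalIntegral.norm_integral_le_integral_norm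
          (f := fun t : ℝ => Real.cos t - 1) (μ := MeasureTheory.volume)
          (a := (0:ℝ)) (b := y) hy
        refine this.trans ?_
        apply intervalIntegral.integral_mono_on hy
          (Continuous.intervalIntegrable (by continuity) _ _)
          (Continuous.intervalIntegrable (by continuity) _ _)
        intro t _
        simpa using hcos t
    _ = y ^ 2 / 2 := by
        have h : ∀ t ∈ Set.uIcc (0:ℝ) y, |t| = t := by
          intro t ht
          rw [Set.uIcc_of_le hy] at ht
          exact abs_of_nonneg ht.1
        rw [intervalIntegral.integral_congr h, integral_id]
        ring

lemma keyB (y : ℝ) : |Real.sin y - y| ≤ y ^ 2 / 2 := by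
  rcases le_or_gt 0 y with hy | hy
  · exact keyB0 y hy
  · have := keyB0 (-y) (by linarith)
    rw [Real.sin_neg] at this
    calc |Real.sin y - y| = |-Real.sin y - -y| := by rw [abs_sub_comm]; ring_nf
      _ ≤ (-y) ^ 2 / 2 := this
      _ = y ^ 2 / 2 := by ring

/-- Error of the filtered replacement `ν ↦ sin(ντ)/τ` in the integrated potential term of
the low-regularity integrator for the disordered NLS:
`|(2ν/μ³)(exp(iτμ²)(i + τμ²) − i) − (2 sin(ντ)/(μ³τ))(exp(iτμ²)(i + τμ²) − i)|
  ≤ (1/2) τ³ |μ| ν²`. -/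
theorem stmt_7 (μ ν τ : ℝ) (hμ : μ ≠ 0) (hτ : 0 < τ) :
    ‖((2 * (ν : ℂ) / (μ : ℂ) ^ 3) *
          (Complex.exp (Complex.I * (τ : ℂ) * (μ : ℂ) ^ 2) *
            (Complex.I + (τ : ℂ) * (μ : ℂ) ^ 2) - Complex.I) -
        (2 * (Real.sin (ν * τ) : ℂ) / ((μ : ℂ) ^ 3 * (τ : ℂ))) *
          (Complex.exp (Complex.I * (τ : ℂ) * (μ : ℂ) ^ 2) *
            (Complex.I + (τ : ℂ) * (μ : ℂ) ^ 2) - Complex.I))‖ ≤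
      (1 / 2) * τ ^ 3 * |μ| * ν ^ 2 := by
  have hμc : (μ : ℂ) ≠ 0 := Complex.ofReal_ne_zero.mpr hμ
  have hτc : (τ : ℂ) ≠ 0 := Complex.ofReal_ne_zero.mpr hτ.ne'
  set D : ℂ := Complex.exp (Complex.I * (τ : ℂ) * (μ : ℂ) ^ 2) *
      (Complex.I + (τ : ℂ) * (μ : ℂ) ^ 2) - Complex.I with hD
  have heq : (2 * (ν : ℂ) / (μ : ℂ) ^ 3) * D -
      (2 * (Real.sin (ν * τ) : ℂ) / ((μ : ℂ) ^ 3 * (τ : ℂ))) * D =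
      (((2 * (ν * τ - Real.sin (ν * τ)) / (μ ^ 3 * τ) : ℝ)) : ℂ) * D := by
    push_cast
    field_simp
  rw [heq, norm_mul, Complex.norm_real, Real.norm_eq_abs]
  have hDbound : ‖D‖ ≤ (τ * μ ^ 2) ^ 2 / 2 := by
    have := keyA (τ * μ ^ 2) (by positivity)
    have harg : ((τ * μ ^ 2 : ℝ) : ℂ) = (τ : ℂ) * (μ : ℂ) ^ 2 := by push_cast; ring
    rw [harg] at this
    rw [hD]
    convert this using 3 <;> ring
  have hSbound : |2 * (ν * τ - Real.sin (ν * τ)) / (μ ^ 3 * τ)| ≤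
      ν ^ 2 * τ / |μ| ^ 3 := by
    rw [abs_div, abs_mul]
    have h1 : |ν * τ - Real.sin (ν * τ)| ≤ (ν * τ) ^ 2 / 2 := by
      rw [abs_sub_comm]; exact keyB (ν * τ)
    have h2 : |μ ^ 3 * τ| = |μ| ^ 3 * τ := by
      rw [abs_mul, abs_pow, abs_of_pos hτ]
    rw [h2, abs_two]
    rw [div_le_div_iff₀ (by positivity) (by positivity)]
    have hμ3 : (0:ℝ) < |μ| ^ 3 := by positivity
    nlinarith [mul_le_mul_of_nonneg_left h1 (by positivity : (0:ℝ) ≤ 2 * (|μ| ^ 3 * τ)),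
      sq_nonneg ν, mul_pos hμ3 hτ]
  calc |2 * (ν * τ - Real.sin (ν * τ)) / (μ ^ 3 * τ)| * ‖D‖
      ≤ (ν ^ 2 * τ / |μ| ^ 3) * ((τ * μ ^ 2) ^ 2 / 2) :=
        mul_le_mul hSbound hDbound (norm_nonneg _) (by positivity)
    _ = (1 / 2) * τ ^ 3 * |μ| * ν ^ 2 := by
        have h4 : μ ^ 4 = |μ| ^ 4 := by
          rw [show μ ^ 4 = (μ ^ 2) ^ 2 by ring, ← sq_abs μ]; ring
        field_simp
        linear_combination ν ^ 2 * h4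
end

section
/- For all real numbers p, q and all τ ≥ 0 one has |∫₀^τ (exp(i ρ (p + q)) − exp(i ρ p) − exp(i ρ q) + 1) dρ| ≤ τ³ |p| |q| / 3. -/
open Complex in
lemma aux_exp_I_sub_one_le (x : ℝ) :
    ‖Complex.exp (Complex.I * x) - 1‖ ≤ |x| := by
  have h : Complex.exp (Complex.I * x) - 1 =
      (Real.cos x - 1 : ℝ) + (Real.sin x : ℝ) * Complex.I := by
    rw [mul_comm, Complex.exp_mul_I, ← Complex.ofReal_cos, ← Complex.ofReal_sin]
    push_cast
    ring
  rw [h]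
  have habs : ‖((Real.cos x - 1 : ℝ) + (Real.sin x : ℝ) * Complex.I : ℂ)‖
      = Real.sqrt ((Real.cos x - 1)^2 + (Real.sin x)^2) := by
    rw [Complex.norm_def, Complex.normSq_add_mul_I]
  rw [habs]
  have hcs : (Real.cos x - 1)^2 + (Real.sin x)^2 = 4 * Real.sin (x/2) ^ 2 := by
    have := Real.sin_sq_add_cos_sq x
    have h2 : Real.cos x = 1 - 2 * Real.sin (x/2) ^ 2 := by
      have hc2 := Real.cos_two_mul (x/2)
      rw [show (2:ℝ) * (x/2) = x by ring] at hc2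
      have := Real.sin_sq_add_cos_sq (x/2)
      nlinarith
    nlinarith [Real.sin_sq_add_cos_sq x]
  rw [hcs]
  have h4 : (4 : ℝ) * Real.sin (x/2)^2 = (2 * |Real.sin (x/2)|)^2 := by
    rw [mul_pow, _root_.sq_abs]; ring
  rw [h4, Real.sqrt_sq (by positivity)]
  have := Real.abs_sin_le_abs (x := x/2)
  calc 2 * |Real.sin (x/2)| ≤ 2 * |x/2| := by linarith
    _ = |x| := by rw [abs_div]; simp; ring

lemma aux_pointwise (p q ρ : ℝ) :
    ‖((Complex.exp (Complex.I * (ρ : ℂ) * ((p : ℂ) + (q : ℂ))) -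
          Complex.exp (Complex.I * (ρ : ℂ) * (p : ℂ)) -
          Complex.exp (Complex.I * (ρ : ℂ) * (q : ℂ)) + 1))‖ ≤ ρ^2 * |p| * |q| := by
  have hfac : (Complex.exp (Complex.I * (ρ : ℂ) * ((p : ℂ) + (q : ℂ))) -
          Complex.exp (Complex.I * (ρ : ℂ) * (p : ℂ)) -
          Complex.exp (Complex.I * (ρ : ℂ) * (q : ℂ)) + 1) =
      (Complex.exp (Complex.I * (ρ : ℂ) * (p : ℂ)) - 1) *
      (Complex.exp (Complex.I * (ρ : ℂ) * (q : ℂ)) - 1) := by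
    rw [show Complex.I * (ρ : ℂ) * ((p : ℂ) + (q : ℂ)) =
        Complex.I * (ρ : ℂ) * (p : ℂ) + Complex.I * (ρ : ℂ) * (q : ℂ) by ring,
      Complex.exp_add]
    ring
  rw [hfac, norm_mul]
  have h1 : ‖Complex.exp (Complex.I * (ρ : ℂ) * (p : ℂ)) - 1‖ ≤ |ρ * p| := by
    have := aux_exp_I_sub_one_le (ρ * p)
    simpa [mul_assoc] using this
  have h2 : ‖Complex.exp (Complex.I * (ρ : ℂ) * (q : ℂ)) - 1‖ ≤ |ρ * q| := by
    have := aux_exp_I_sub_one_le (ρ * q)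
    simpa [mul_assoc] using this
  calc _ ≤ |ρ * p| * |ρ * q| :=
        mul_le_mul h1 h2 (by positivity) (abs_nonneg _)
    _ = ρ^2 * |p| * |q| := by
        rw [abs_mul, abs_mul]; rw [← sq_abs ρ]; ring

/-- Time-integrated phase-factorization estimate used in the low-regularity integrator for
the cubic nonlinearity of the disordered NLS:
`|∫₀^τ (exp(iρ(p+q)) − exp(iρp) − exp(iρq) + 1) dρ| ≤ τ³|p||q|/3`. -/
theorem stmt_11 (p q τ : ℝ) (hτ : 0 ≤ τ) :
    ‖(∫ ρ in (0 : ℝ)..τ,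
        (Complex.exp (Complex.I * (ρ : ℂ) * ((p : ℂ) + (q : ℂ))) -
          Complex.exp (Complex.I * (ρ : ℂ) * (p : ℂ)) -
          Complex.exp (Complex.I * (ρ : ℂ) * (q : ℂ)) + 1))‖ ≤
      τ ^ 3 * |p| * |q| / 3 := by
  have key : ‖∫ ρ in (0 : ℝ)..τ,
        (Complex.exp (Complex.I * (ρ : ℂ) * ((p : ℂ) + (q : ℂ))) -
          Complex.exp (Complex.I * (ρ : ℂ) * (p : ℂ)) -
          Complex.exp (Complex.I * (ρ : ℂ) * (q : ℂ)) + 1)‖ ≤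
      abs (∫ ρ in (0 : ℝ)..τ, ρ^2 * |p| * |q|) := by
    apply intervalIntegral.norm_integral_le_abs_of_norm_le
    · filter_upwards with ρ
      simpa using aux_pointwise p q ρ
    · apply IntervalIntegrable.mul_const
      apply IntervalIntegrable.mul_const
      exact (intervalIntegral.intervalIntegrable_pow 2)
  have hint : (∫ ρ in (0 : ℝ)..τ, ρ^2 * |p| * |q|) = τ^3 * |p| * |q| / 3 := by
    rw [intervalIntegral.integral_mul_const, intervalIntegral.integral_mul_const,
      integral_pow]
    ring
  rw [hint, abs_of_nonneg (by positivity)] at key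
  exact key
end

section
/- Let a, b, τ be real numbers with a ≠ 0 and τ > 0. Then |∫₀^τ exp(i s (a² + 2ab)) ds − (exp(i τ a²) − 1)/(i a²) − (2 sin(b τ)/(a³ τ))·(exp(i τ a²)(i + τ a²) − i)| ≤ (2/3) τ³ a² b² + (1/2) τ³ |a| b². -/
open Complex intervalIntegral

lemma abs_exp_I_sub_one (t : ℝ) : ‖Complex.exp (t * Complex.I) - 1‖ ≤ |t| := by
  have h : ‖Complex.exp (t * Complex.I) - 1‖ ^ 2 ≤ |t| ^ 2 := by
    rw [← Complex.normSq_eq_norm_sq, Complex.exp_mul_I]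
    have h1 : Complex.normSq (Complex.cos t + Complex.sin t * Complex.I - 1)
        = (Real.cos t - 1) ^ 2 + Real.sin t ^ 2 := by
      simp [Complex.normSq_apply, Complex.cos_ofReal_re, Complex.sin_ofReal_re]
      ring_nf
    rw [h1, _root_.sq_abs]
    have h2 := Real.one_sub_sq_div_two_le_cos (x := t)
    nlinarith [Real.sin_sq_add_cos_sq t, Real.cos_le_one t]
  have := abs_nonneg t
  nlinarith [norm_nonneg (Complex.exp (t * Complex.I) - 1)]

lemma key_exp (x : ℝ) : ‖Complex.exp (x * Complex.I) - 1 - x * Complex.I‖ ≤ x ^ 2 / 2 := by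
  suffices H : ∀ y : ℝ, 0 ≤ y → ‖Complex.exp (y * Complex.I) - 1 - y * Complex.I‖ ≤ y ^ 2 / 2 by
    rcases le_or_gt 0 x with hx | hx
    · exact H x hx
    · have hy := H (-x) (by linarith)
      have hc : (Complex.exp ((-x : ℝ) * Complex.I) - 1 - (-x : ℝ) * Complex.I)
          = starRingEnd ℂ (Complex.exp (x * Complex.I) - 1 - x * Complex.I) := by
        simp [map_sub, ← Complex.exp_conj, map_mul, Complex.conj_I, Complex.conj_ofReal]
      rw [hc, Complex.norm_conj] at hy
      simpa using hy
  intro y hy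
  have hderiv : ∀ t ∈ Set.uIcc (0:ℝ) y,
      HasDerivAt (fun t : ℝ => Complex.exp (t * Complex.I) - t * Complex.I)
        (Complex.I * (Complex.exp (t * Complex.I) - 1)) t := by
    intro t _
    have h1 : HasDerivAt (fun t : ℝ => (t : ℂ) * Complex.I) Complex.I t := by
      simpa using (Complex.ofRealCLM.hasDerivAt (x := t)).mul_const Complex.I
    have h3 := h1.cexp.sub h1
    rw [show Complex.I * (Complex.exp (t * Complex.I) - 1) = Complex.exp (t * Complex.I) * Complex.I - Complex.I by ring]
    exact h3
  have hint : IntervalIntegrable (fun t : ℝ => Complex.I * (Complex.exp (t * Complex.I) - 1))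
      MeasureTheory.volume 0 y :=
    (Continuous.intervalIntegrable (by fun_prop) _ _)
  have hFTC := intervalIntegral.integral_eq_sub_of_hasDerivAt hderiv hint
  have heq : Complex.exp (y * Complex.I) - 1 - y * Complex.I
      = ∫ t in (0:ℝ)..y, Complex.I * (Complex.exp (t * Complex.I) - 1) := by
    rw [hFTC]; simp; ring
  rw [heq]
  calc ‖∫ t in (0:ℝ)..y, Complex.I * (Complex.exp (t * Complex.I) - 1)‖
      ≤ ∫ t in (0:ℝ)..y, ‖Complex.I * (Complex.exp (t * Complex.I) - 1)‖ :=
        intervalIntegral.norm_integral_le_integral_norm hy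
    _ ≤ ∫ t in (0:ℝ)..y, t := by
        apply intervalIntegral.integral_mono_on hy
        · exact (Continuous.intervalIntegrable (by fun_prop) _ _)
        · exact intervalIntegral.intervalIntegrable_id
        · intro t ht
          have := abs_exp_I_sub_one t
          simp only [norm_mul, Complex.norm_I, one_mul]
          calc ‖Complex.exp (t * Complex.I) - 1‖ ≤ |t| := this
            _ = t := abs_of_nonneg ht.1
    _ = y ^ 2 / 2 := by simp

lemma key_sin (x : ℝ) : |x - Real.sin x| ≤ x ^ 2 / 2 := by
  have h := key_exp x
  have him : (Complex.exp (x * Complex.I) - 1 - x * Complex.I).im = Real.sin x - x := by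
    simp [Complex.exp_mul_I, Complex.sin_ofReal_re, Complex.cos_ofReal_im, Complex.sin_ofReal_im]
  calc |x - Real.sin x| = |Real.sin x - x| := by rw [abs_sub_comm]
    _ = |(Complex.exp (x * Complex.I) - 1 - x * Complex.I).im| := by rw [him]
    _ ≤ ‖Complex.exp (x * Complex.I) - 1 - x * Complex.I‖ := Complex.abs_im_le_norm _
    _ ≤ x ^ 2 / 2 := h

/-- Total frequency-level local error of the filtered low-regularity integrator's
approximation of the potential term of the disordered NLS:
`|∫₀^τ exp(is(a² + 2ab)) ds − (exp(iτa²) − 1)/(ia²)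
   − (2 sin(bτ)/(a³τ))(exp(iτa²)(i + τa²) − i)| ≤ (2/3)τ³a²b² + (1/2)τ³|a|b²`. -/
theorem stmt_14 (a b τ : ℝ) (ha : a ≠ 0) (hτ : 0 < τ) :
    Norm.norm
      ((∫ s in (0 : ℝ)..τ,
          Complex.exp (Complex.I * (s : ℂ) * ((a : ℂ) ^ 2 + 2 * (a : ℂ) * (b : ℂ)))) -
        (Complex.exp (Complex.I * (τ : ℂ) * (a : ℂ) ^ 2) - 1) / (Complex.I * (a : ℂ) ^ 2) -
        (2 * (Real.sin (b * τ) : ℂ) / ((a : ℂ) ^ 3 * (τ : ℂ))) *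
          (Complex.exp (Complex.I * (τ : ℂ) * (a : ℂ) ^ 2) *
            (Complex.I + (τ : ℂ) * (a : ℂ) ^ 2) - Complex.I)) ≤
      (2 / 3) * τ ^ 3 * a ^ 2 * b ^ 2 + (1 / 2) * τ ^ 3 * |a| * b ^ 2 := by
  have haC : (a : ℂ) ≠ 0 := Complex.ofReal_ne_zero.2 ha
  have hτC : (τ : ℂ) ≠ 0 := Complex.ofReal_ne_zero.2 hτ.ne'
  have hI : Complex.I ≠ 0 := Complex.I_ne_zero
  set K : ℂ := Complex.exp (Complex.I * (τ : ℂ) * (a : ℂ) ^ 2) *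
      (Complex.I + (τ : ℂ) * (a : ℂ) ^ 2) - Complex.I with hKdef
  -- FTC for the linearized integrand
  have hFTC : (∫ s in (0:ℝ)..τ,
        Complex.exp (Complex.I * (s:ℂ) * (a:ℂ)^2) * (1 + 2*Complex.I*(a:ℂ)*(b:ℂ)*(s:ℂ)))
      = (Complex.exp (Complex.I * (τ:ℂ) * (a:ℂ)^2) - 1) / (Complex.I * (a:ℂ)^2)
        + (2*(b:ℂ)/(a:ℂ)^3) * K := by
    have hderiv : ∀ s ∈ Set.uIcc (0:ℝ) τ, HasDerivAt
        (fun s : ℝ => Complex.exp (Complex.I*(s:ℂ)*(a:ℂ)^2)/(Complex.I*(a:ℂ)^2)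
          + 2*Complex.I*(a:ℂ)*(b:ℂ)*((s:ℂ)*Complex.exp (Complex.I*(s:ℂ)*(a:ℂ)^2)/(Complex.I*(a:ℂ)^2)
            + Complex.exp (Complex.I*(s:ℂ)*(a:ℂ)^2)/(a:ℂ)^4))
        (Complex.exp (Complex.I*(s:ℂ)*(a:ℂ)^2) * (1 + 2*Complex.I*(a:ℂ)*(b:ℂ)*(s:ℂ))) s := by
      intro s _
      have hid : HasDerivAt (fun s : ℝ => (s:ℂ)) 1 s := Complex.ofRealCLM.hasDerivAt
      have h0 : HasDerivAt (fun s : ℝ => Complex.I*(s:ℂ)*(a:ℂ)^2) (Complex.I*(a:ℂ)^2) s := by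
        simpa using (hid.const_mul Complex.I).mul_const ((a:ℂ)^2)
      have he := h0.cexp
      have h4 := (he.div_const (Complex.I*(a:ℂ)^2)).add
        (((hid.mul he).div_const (Complex.I*(a:ℂ)^2)).add (he.div_const ((a:ℂ)^4))
          |>.const_mul (2*Complex.I*(a:ℂ)*(b:ℂ)))
      refine h4.congr_deriv ?_
      field_simp
      linear_combination (2*(b:ℂ)) * Complex.I_sq
    have hint : IntervalIntegrable
        (fun s : ℝ => Complex.exp (Complex.I*(s:ℂ)*(a:ℂ)^2) * (1 + 2*Complex.I*(a:ℂ)*(b:ℂ)*(s:ℂ)))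
        MeasureTheory.volume 0 τ :=
      (Continuous.intervalIntegrable (by fun_prop) _ _)
    rw [intervalIntegral.integral_eq_sub_of_hasDerivAt hderiv hint]
    rw [hKdef]
    simp only [Complex.ofReal_zero, mul_zero, zero_mul, Complex.exp_zero]
    simp only [mul_comm Complex.I ((a:ℂ)^2), ← div_div, Complex.div_I]
    field_simp [haC]
    linear_combination (-2*(τ:ℂ)*(a:ℂ)^2*Complex.exp (Complex.I*(τ:ℂ)*(a:ℂ)^2)*(b:ℂ)) * Complex.I_sq
  -- splitting the integrals
  have hint1 : IntervalIntegrable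
      (fun s : ℝ => Complex.exp (Complex.I * (s:ℂ) * ((a:ℂ)^2 + 2*(a:ℂ)*(b:ℂ))))
      MeasureTheory.volume 0 τ := (Continuous.intervalIntegrable (by fun_prop) _ _)
  have hint2 : IntervalIntegrable
      (fun s : ℝ => Complex.exp (Complex.I*(s:ℂ)*(a:ℂ)^2) * (1 + 2*Complex.I*(a:ℂ)*(b:ℂ)*(s:ℂ)))
      MeasureTheory.volume 0 τ := (Continuous.intervalIntegrable (by fun_prop) _ _)
  have hsub := intervalIntegral.integral_sub hint1 hint2
  have hEq : ∀ s : ℝ, Complex.exp (Complex.I * (s:ℂ) * ((a:ℂ)^2 + 2*(a:ℂ)*(b:ℂ)))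
      - Complex.exp (Complex.I*(s:ℂ)*(a:ℂ)^2) * (1 + 2*Complex.I*(a:ℂ)*(b:ℂ)*(s:ℂ))
      = Complex.exp (Complex.I*(s:ℂ)*(a:ℂ)^2) *
        (Complex.exp (((2*a*b*s : ℝ):ℂ) * Complex.I) - 1 - ((2*a*b*s : ℝ):ℂ) * Complex.I) := by
    intro s
    rw [show Complex.I * (s:ℂ) * ((a:ℂ)^2 + 2*(a:ℂ)*(b:ℂ))
        = Complex.I*(s:ℂ)*(a:ℂ)^2 + ((2*a*b*s : ℝ):ℂ) * Complex.I by push_cast; ring,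
      Complex.exp_add]
    push_cast
    ring
  -- bound on the first error term
  have hb1 : ‖∫ s in (0:ℝ)..τ, Complex.exp (Complex.I*(s:ℂ)*(a:ℂ)^2) *
        (Complex.exp (((2*a*b*s : ℝ):ℂ) * Complex.I) - 1 - ((2*a*b*s : ℝ):ℂ) * Complex.I)‖
      ≤ (2/3) * τ^3 * a^2 * b^2 := by
    have hgc : Continuous (fun s : ℝ => Complex.exp (Complex.I*(s:ℂ)*(a:ℂ)^2) *
        (Complex.exp (((2*a*b*s : ℝ):ℂ) * Complex.I) - 1 - ((2*a*b*s : ℝ):ℂ) * Complex.I)) := by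
      fun_prop
    have hle : ∀ s ∈ Set.Icc (0:ℝ) τ,
        ‖Complex.exp (Complex.I*(s:ℂ)*(a:ℂ)^2) *
          (Complex.exp (((2*a*b*s : ℝ):ℂ) * Complex.I) - 1 - ((2*a*b*s : ℝ):ℂ) * Complex.I)‖
        ≤ 2 * a^2 * b^2 * s^2 := by
      intro s _
      have h1 : ‖Complex.exp (Complex.I*(s:ℂ)*(a:ℂ)^2)‖ = 1 := by
        rw [show Complex.I*(s:ℂ)*(a:ℂ)^2 = ((s*a^2 : ℝ):ℂ) * Complex.I by push_cast; ring,
          Complex.norm_exp_ofReal_mul_I]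
      rw [norm_mul, h1, one_mul]
      calc ‖Complex.exp (((2*a*b*s : ℝ):ℂ) * Complex.I) - 1 - ((2*a*b*s : ℝ):ℂ) * Complex.I‖
          ≤ (2*a*b*s)^2 / 2 := key_exp (2*a*b*s)
        _ = 2 * a^2 * b^2 * s^2 := by ring
    calc ‖(∫ s in (0:ℝ)..τ, Complex.exp (Complex.I*(s:ℂ)*(a:ℂ)^2) *
            (Complex.exp (((2*a*b*s : ℝ):ℂ) * Complex.I) - 1 - ((2*a*b*s : ℝ):ℂ) * Complex.I))‖
        ≤ ∫ s in (0:ℝ)..τ, ‖Complex.exp (Complex.I*(s:ℂ)*(a:ℂ)^2) *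
            (Complex.exp (((2*a*b*s : ℝ):ℂ) * Complex.I) - 1 - ((2*a*b*s : ℝ):ℂ) * Complex.I)‖ :=
          intervalIntegral.norm_integral_le_integral_norm hτ.le
      _ ≤ ∫ s in (0:ℝ)..τ, 2 * a^2 * b^2 * s^2 := by
          apply intervalIntegral.integral_mono_on hτ.le
          · exact Continuous.intervalIntegrable hgc.norm _ _
          · exact Continuous.intervalIntegrable (by fun_prop) _ _
          · exact hle
      _ = (2/3) * τ^3 * a^2 * b^2 := by
          rw [_root_.intervalIntegral.integral_const_mul, integral_pow]
          norm_num
          ring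
  -- bound on K
  have hK : ‖K‖ ≤ (τ * a^2)^2 / 2 := by
    have hx := key_exp (-(τ*a^2))
    have hmul : Complex.exp (((-(τ*a^2) : ℝ):ℂ) * Complex.I) *
        Complex.exp (((τ*a^2 : ℝ):ℂ) * Complex.I) = 1 := by
      rw [← Complex.exp_add, ← Complex.exp_zero]
      congr 1
      push_cast
      ring
    have hrw : K = (-Complex.I) *
        (Complex.exp (((-(τ*a^2) : ℝ):ℂ) * Complex.I) - 1 - ((-(τ*a^2) : ℝ):ℂ) * Complex.I) *
        Complex.exp (((τ*a^2 : ℝ):ℂ) * Complex.I) := by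
      have h2 : Complex.exp (Complex.I*(τ:ℂ)*(a:ℂ)^2) = Complex.exp (((τ*a^2 : ℝ):ℂ) * Complex.I) := by
        congr 1; push_cast; ring
      rw [hKdef, h2]
      push_cast at hmul ⊢
      linear_combination Complex.I * hmul +
        ((τ:ℂ)*(a:ℂ)^2*Complex.exp ((τ:ℂ)*(a:ℂ)^2*Complex.I)) * Complex.I_sq
    rw [hrw]
    rw [norm_mul, norm_mul]
    simp only [norm_neg, Complex.norm_I, one_mul, Complex.norm_exp_ofReal_mul_I, mul_one]
    calc ‖Complex.exp (((-(τ*a^2) : ℝ):ℂ) * Complex.I) - 1 - ((-(τ*a^2) : ℝ):ℂ) * Complex.I‖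
        ≤ (-(τ*a^2))^2 / 2 := key_exp _
      _ = (τ*a^2)^2 / 2 := by ring
  -- bound on the filtering error
  have hb2 : ‖(2*(b:ℂ)/(a:ℂ)^3) * K
      - (2 * (Real.sin (b * τ) : ℂ) / ((a : ℂ) ^ 3 * (τ : ℂ))) * K‖
      ≤ (1/2) * τ^3 * |a| * b^2 := by
    have hrw : (2*(b:ℂ)/(a:ℂ)^3) * K
        - (2 * (Real.sin (b * τ) : ℂ) / ((a : ℂ) ^ 3 * (τ : ℂ))) * K
        = ((2 * (b*τ - Real.sin (b*τ)) / (a^3 * τ) : ℝ) : ℂ) * K := by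
      push_cast
      field_simp
    rw [hrw, norm_mul, Complex.norm_real, Real.norm_eq_abs]
    have hsin := key_sin (b*τ)
    have hKnn := norm_nonneg K
    have haabs : 0 < |a| := abs_pos.2 ha
    have h1 : |2 * (b*τ - Real.sin (b*τ)) / (a^3 * τ)| = 2 * |b*τ - Real.sin (b*τ)| / (|a|^3 * τ) := by
      rw [abs_div, abs_mul, abs_mul, _root_.abs_pow, abs_of_pos hτ]
      norm_num
    rw [h1]
    have step : 2 * |b*τ - Real.sin (b*τ)| / (|a|^3 * τ) * ‖K‖
        ≤ 2 * ((b*τ)^2/2) / (|a|^3 * τ) * ((τ * a^2)^2 / 2) := by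
      apply mul_le_mul
      · apply div_le_div_of_nonneg_right _ (by positivity)
        · linarith
      · exact hK
      · exact hKnn
      · positivity
    refine step.trans (le_of_eq ?_)
    field_simp
    linear_combination (-b^2*(a^2+|a|^2)) * _root_.sq_abs a
  -- combine
  have hdecomp : (∫ s in (0 : ℝ)..τ,
          Complex.exp (Complex.I * (s : ℂ) * ((a : ℂ) ^ 2 + 2 * (a : ℂ) * (b : ℂ)))) -
        (Complex.exp (Complex.I * (τ : ℂ) * (a : ℂ) ^ 2) - 1) / (Complex.I * (a : ℂ) ^ 2) -
        (2 * (Real.sin (b * τ) : ℂ) / ((a : ℂ) ^ 3 * (τ : ℂ))) * K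
      = (∫ s in (0:ℝ)..τ, Complex.exp (Complex.I*(s:ℂ)*(a:ℂ)^2) *
          (Complex.exp (((2*a*b*s : ℝ):ℂ) * Complex.I) - 1 - ((2*a*b*s : ℝ):ℂ) * Complex.I))
        + ((2*(b:ℂ)/(a:ℂ)^3) * K
          - (2 * (Real.sin (b * τ) : ℂ) / ((a : ℂ) ^ 3 * (τ : ℂ))) * K) := by
    have h5 : (∫ s in (0:ℝ)..τ, Complex.exp (Complex.I*(s:ℂ)*(a:ℂ)^2) *
          (Complex.exp (((2*a*b*s : ℝ):ℂ) * Complex.I) - 1 - ((2*a*b*s : ℝ):ℂ) * Complex.I))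
        = (∫ s in (0 : ℝ)..τ,
            Complex.exp (Complex.I * (s : ℂ) * ((a : ℂ) ^ 2 + 2 * (a : ℂ) * (b : ℂ))))
          - (∫ s in (0:ℝ)..τ,
            Complex.exp (Complex.I*(s:ℂ)*(a:ℂ)^2) * (1 + 2*Complex.I*(a:ℂ)*(b:ℂ)*(s:ℂ))) := by
      rw [← hsub]
      apply intervalIntegral.integral_congr
      intro s _
      exact (hEq s).symm
    rw [h5, hFTC]
    ring
  rw [hdecomp]
  calc ‖_‖ ≤ _ := norm_add_le _ _
    _ ≤ (2/3) * τ^3 * a^2 * b^2 + (1/2) * τ^3 * |a| * b^2 := add_le_add hb1 hb2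
end
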